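/- Suppose f : E → ℝ is differentiable with L-smooth gradient with respect to ‖·‖, β > 0, f* := inf_{x ∈ βD} f(x) > −∞, Δ := f(x¹) − f*, and x¹ ∈ βD := {x : ‖x‖ ≤ β}. Consider the iterates of S³CG (Variant 2): v^k = x^k − β·lmo(d^k), η_k = min{ρ, ⟨d^k, v^k⟩/(4β²)}, x^{k+1} = x^k − γη_k v^k, with constant stepsize γ ≤ 1/L, γρ ≤ 1, α ∈ (0,1], where d^k = α·g_k + (1−α)·d^{k−1}, d⁰ = 0, and g_k is a conditionally unbiased stochastic gradient at x^k with conditional variance (in ‖·‖₂) at most σ². Let λ^k := d^k − ∇f(x^k), D₂ := sup{‖x − y‖₂ : x, y ∈ βD}, M := max{16β², 2}, M' := max{16D₂β², 3D₂}, and ε_n := (1/n)·Σ_{k=1}^n [ M'·ρ·E[‖λ^k‖₂] + 4D₂²·E[‖λ^k‖₂²] ]. Then for all u ∈ βD, (1/n)·Σ_{k=1}^n E[⟨∇f(x^k), x^k − u⟩] ≤ √(MΔ)/√(γn) + MΔ/(γρn) + √(ε_n) + ε_n/ρ. -/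

import Mathlib

open MeasureTheory
open scoped RealInnerProductSpace

set_option maxHeartbeats 1000000 in
lemma SCGSS_pointwise
    {E : Type*} [NormedAddCommGroup E] [InnerProductSpace ℝ E]
    (Nm : E → ℝ)
    (hNmsmul : ∀ (a : ℝ) (z : E), Nm (a • z) = |a| * Nm z)
    (hNmadd : ∀ z w : E, Nm (z + w) ≤ Nm z + Nm w)
    (lmo : E → E)
    (hlmo : ∀ d : E, Nm (lmo d) ≤ 1 ∧ ∀ z : E, Nm z ≤ 1 → ⟪d, lmo d⟫ ≤ ⟪d, z⟫)
    (f : E → ℝ) (f' : E → E) (L γ ρ β D2 : ℝ)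
    (hL : 0 < L) (hγ : 0 < γ) (hρ : 0 < ρ) (hβ : 0 < β)
    (hγL : γ ≤ 1/L) (hγρ : γ*ρ ≤ 1)
    (hdesc : ∀ z w : E, f w ≤ f z + ⟪f' z, w - z⟫ + L/2 * (Nm (w-z))^2)
    (hD2 : ∀ z w : E, Nm z ≤ β → Nm w ≤ β → ‖z - w‖ ≤ D2)
    (u : E) (hu : Nm u ≤ β)
    (xk xk1 dk : E) (hxk : Nm xk ≤ β)
    (hstep : xk1 = xk - (γ * min ρ (⟪dk, xk - β • lmo dk⟫ / (4*β^2))) • (xk - β • lmo dk))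
    (t : ℝ) (ht : 0 < t) :
    ⟪f' xk, xk - u⟫ ≤ (2/ρ + 4*β^2/t) * ((f xk - f xk1)/γ + ρ*D2*‖dk - f' xk‖)
        + t/2 + D2*‖dk - f' xk‖
      ∧ 0 ≤ (f xk - f xk1)/γ + ρ*D2*‖dk - f' xk‖
      ∧ Nm xk1 ≤ β := by
  have hD2nn : 0 ≤ D2 := le_trans (by simp) (hD2 xk xk hxk hxk)
  set w := lmo dk with hw
  set v := xk - β • w with hv
  set hh := ⟪dk, v⟫ with hhh
  -- lmo optimality over βD
  have hopt : ∀ z : E, Nm z ≤ β → ⟪dk, β • w⟫ ≤ ⟪dk, z⟫ := by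
    intro z hz
    have h1 : Nm (β⁻¹ • z) ≤ 1 := by
      rw [hNmsmul, abs_of_nonneg (by positivity)]
      calc β⁻¹ * Nm z ≤ β⁻¹ * β := by
            apply mul_le_mul_of_nonneg_left hz (by positivity)
        _ = 1 := by field_simp
    have h2 := (hlmo dk).2 _ h1
    rw [real_inner_smul_right] at h2
    have h3 := mul_le_mul_of_nonneg_left h2 hβ.le
    rw [real_inner_smul_right]
    calc β * ⟪dk, w⟫ ≤ β * (β⁻¹ * ⟪dk, z⟫) := h3
      _ = ⟪dk, z⟫ := by field_simp
  have hwfeas : Nm (β • w) ≤ β := by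
    rw [hNmsmul, abs_of_nonneg hβ.le]
    nlinarith [(hlmo dk).1]
  have hh0 : 0 ≤ hh := by
    have := hopt xk hxk
    simp only [hhh, hv, inner_sub_right]
    linarith
  set η := min ρ (hh / (4*β^2)) with hη
  clear_value w v hh η
  have hη0 : 0 ≤ η := hη ▸ le_min hρ.le (div_nonneg hh0 (by positivity))
  have hηρ : η ≤ ρ := hη ▸ min_le_left _ _
  have hγη1 : γ * η ≤ 1 := le_trans (by nlinarith) hγρ
  have hγη0 : 0 ≤ γ * η := by positivity
  -- step in terms of our variables
  have hstep' : xk1 = xk - (γ * η) • v := by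
    rw [hstep]
  -- feasibility of next iterate
  have hfeas1 : Nm xk1 ≤ β := by
    have hx1e : xk1 = (1 - γ*η) • xk + (γ*η*β) • w := by
      rw [hstep', hv]; module
    rw [hx1e]
    calc Nm ((1 - γ*η) • xk + (γ*η*β) • w)
        ≤ Nm ((1 - γ*η) • xk) + Nm ((γ*η*β) • w) := hNmadd _ _
      _ = (1 - γ*η) * Nm xk + (γ*η*β) * Nm w := by
          rw [hNmsmul, hNmsmul, abs_of_nonneg (by linarith), abs_of_nonneg (by positivity)]
      _ ≤ (1 - γ*η) * β + (γ*η*β) * 1 := by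
          have h1 : (1 - γ*η) * Nm xk ≤ (1 - γ*η) * β :=
            mul_le_mul_of_nonneg_left hxk (by linarith)
          have h2 : (γ*η*β) * Nm w ≤ (γ*η*β) * 1 :=
            mul_le_mul_of_nonneg_left (hw ▸ (hlmo dk).1) (by positivity)
          linarith
      _ = β := by ring
  -- norms of v
  have hNmv : Nm v ≤ 2*β := by
    have h1 : Nm (xk + -(β • w)) ≤ Nm xk + Nm (-(β • w)) := hNmadd _ _
    have h2 : Nm (-(β • w)) = Nm (β • w) := by
      rw [← neg_one_smul ℝ (β • w), hNmsmul]; norm_num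
    have : v = xk + -(β • w) := by rw [hv]; abel
    rw [this]
    linarith
  have hNm0' : Nm 0 = 0 := by simpa using hNmsmul 0 0
  have hNmneg : ∀ z : E, Nm (-z) = Nm z := by
    intro z; rw [← neg_one_smul ℝ z, hNmsmul]; norm_num
  have hNmv0 : 0 ≤ Nm v := by
    have h1 := hNmadd v (-v)
    simp only [add_neg_cancel, hNm0', hNmneg] at h1
    linarith
  -- Euclidean norm of v
  have hv2 : ‖v‖ ≤ D2 := hv ▸ hD2 xk (β • w) hxk hwfeas
  set ln := ‖dk - f' xk‖ with hln
  have hln0 : 0 ≤ ln := norm_nonneg _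
  -- descent inequality
  have hgL : γ * L ≤ 1 := by
    rw [le_div_iff₀ hL] at hγL; linarith
  have hdesc1 : f xk1 ≤ f xk - (γ*η)*hh + γ*ρ*D2*ln + 2*γ*η^2*β^2 := by
    have h0 := hdesc xk xk1
    have hd1 : xk1 - xk = -((γ*η) • v) := by rw [hstep']; abel
    have hinner : ⟪f' xk, xk1 - xk⟫ = -((γ*η) * ⟪f' xk, v⟫) := by
      rw [hd1, inner_neg_right, real_inner_smul_right]
    have hnmstep : Nm (xk1 - xk) = (γ*η) * Nm v := by
      rw [hd1, hNmneg, hNmsmul, abs_of_nonneg hγη0]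
    rw [hinner, hnmstep] at h0
    have hfv : ⟪f' xk, v⟫ = hh - ⟪dk - f' xk, v⟫ := by
      rw [inner_sub_left, ← hhh]; ring
    have hcs : ⟪dk - f' xk, v⟫ ≤ ln * D2 := by
      calc ⟪dk - f' xk, v⟫ ≤ ‖dk - f' xk‖ * ‖v‖ := real_inner_le_norm _ _
        _ ≤ ln * D2 := by apply mul_le_mul_of_nonneg_left hv2 hln0
    have hquad : L/2 * ((γ*η) * Nm v)^2 ≤ 2*γ*η^2*β^2 := by
      have ha : (γ*η) * Nm v ≤ (γ*η) * (2*β) := mul_le_mul_of_nonneg_left hNmv hγη0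
      have h1 : ((γ*η) * Nm v)^2 ≤ ((γ*η) * (2*β))^2 :=
        pow_le_pow_left₀ (mul_nonneg hγη0 hNmv0) ha 2
      have h2 : L/2 * ((γ*η) * Nm v)^2 ≤ L/2 * ((γ*η) * (2*β))^2 :=
        mul_le_mul_of_nonneg_left h1 (by positivity)
      have h3 : L/2 * ((γ*η) * (2*β))^2 = (L*γ)*(2*γ*η^2*β^2) := by ring
      have h4 : (L*γ)*(2*γ*η^2*β^2) ≤ 1*(2*γ*η^2*β^2) :=
        mul_le_mul_of_nonneg_right (by linarith) (by positivity)
      linarith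
    have hcross : (γ*η) * ⟪dk - f' xk, v⟫ ≤ γ*ρ*D2*ln := by
      have hb : γ*η ≤ γ*ρ := mul_le_mul_of_nonneg_left hηρ hγ.le
      calc (γ*η) * ⟪dk - f' xk, v⟫ ≤ (γ*η) * (ln * D2) :=
            mul_le_mul_of_nonneg_left hcs hγη0
        _ ≤ (γ*ρ) * (ln * D2) :=
            mul_le_mul_of_nonneg_right hb (mul_nonneg hln0 hD2nn)
        _ = γ*ρ*D2*ln := by ring
    have hid : (γ*η) * ⟪f' xk, v⟫ = (γ*η)*hh - (γ*η)*⟪dk - f' xk, v⟫ := by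
      rw [hfv]; ring
    linarith [h0, hid, hcross, hquad]
  -- m ≤ η hh - 2 η² β²
  set m := min (ρ*hh/2) (hh^2/(8*β^2)) with hm
  clear_value m
  have hm0 : 0 ≤ m := hm ▸ le_min (div_nonneg (mul_nonneg hρ.le hh0) (by norm_num)) (by positivity)
  have hm1 : m ≤ η*hh - 2*η^2*β^2 := by
    rcases le_or_gt ρ (hh / (4*β^2)) with hc | hc
    · have hhe : η = ρ := hη.trans (min_eq_left hc)
      have h4 : ρ * (4*β^2) ≤ hh := by
        rw [le_div_iff₀ (by positivity)] at hc; linarith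
      have hml : m ≤ ρ*hh/2 := hm ▸ min_le_left _ _
      rw [hhe]
      nlinarith [mul_le_mul_of_nonneg_left h4 hρ.le]
    · have hhe : η = hh / (4*β^2) := hη.trans (min_eq_right hc.le)
      have hml : m ≤ hh^2/(8*β^2) := hm ▸ min_le_right _ _
      have heq : η*hh - 2*η^2*β^2 = hh^2/(8*β^2) := by
        rw [hhe]; field_simp; ring
      linarith
  -- Φ := (f xk - f xk1)/γ + ρ D2 ln and m ≤ Φ
  have hmΦ : m ≤ (f xk - f xk1)/γ + ρ*D2*ln := by
    rw [← mul_le_mul_iff_right₀ hγ]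
    have he : γ * ((f xk - f xk1)/γ + ρ*D2*ln) = (f xk - f xk1) + γ*(ρ*D2*ln) := by
      field_simp
    rw [he]
    have hgm := mul_le_mul_of_nonneg_left hm1 hγ.le
    have hg2 : γ*(η*hh - 2*η^2*β^2) = γ*η*hh - 2*γ*η^2*β^2 := by ring
    have hg3 : γ*(ρ*D2*ln) = γ*ρ*D2*ln := by ring
    linarith [hdesc1]
  have hΦ0 : 0 ≤ (f xk - f xk1)/γ + ρ*D2*ln := le_trans hm0 hmΦ
  -- gap bound : ⟪f' xk, xk - u⟫ ≤ hh + D2 * ln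
  have hgap : ⟪f' xk, xk - u⟫ ≤ hh + D2*ln := by
    have h1 : ⟪dk, xk - u⟫ ≤ hh := by
      have := hopt u hu
      simp only [hhh, hv, inner_sub_right]
      linarith
    have h2 : ⟪f' xk, xk - u⟫ = ⟪dk, xk - u⟫ - ⟪dk - f' xk, xk - u⟫ := by
      rw [inner_sub_left]; ring
    have h3 : ⟪dk - f' xk, xk - u⟫ ≥ -(ln * D2) := by
      have hcs2 : |⟪dk - f' xk, xk - u⟫| ≤ ‖dk - f' xk‖ * ‖xk - u‖ :=
        abs_real_inner_le_norm _ _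
      have hxu : ‖xk - u‖ ≤ D2 := hD2 xk u hxk hu
      have : ‖dk - f' xk‖ * ‖xk - u‖ ≤ ln * D2 :=
        mul_le_mul_of_nonneg_left hxu hln0
      cases' abs_le.mp hcs2 with hl hr
      linarith
    have h4 : ln * D2 = D2 * ln := mul_comm _ _
    linarith [h1, h2, h3, h4]
  -- hh ≤ 2m/ρ + 4β² m / t + t/2
  have hhm : hh ≤ 2*m/ρ + 4*β^2*m/t + t/2 := by
    rcases le_total (ρ*hh/2) (hh^2/(8*β^2)) with hc | hc
    · have hme : m = ρ*hh/2 := hm.trans (min_eq_left hc)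
      have heq : 2*m/ρ = hh := by rw [hme]; field_simp
      have h5 : 0 ≤ 4*β^2*m/t := div_nonneg (mul_nonneg (by positivity) hm0) ht.le
      linarith
    · have hme : m = hh^2/(8*β^2) := hm.trans (min_eq_right hc)
      have he : 4*β^2*m/t = hh^2/(2*t) := by rw [hme]; field_simp; ring
      rw [he]
      have : 0 ≤ (hh - t)^2 := sq_nonneg _
      have h2 : hh*(2*t) ≤ hh^2 + t^2 := by nlinarith
      have h3 : hh ≤ (hh^2 + t^2)/(2*t) := by
        rw [le_div_iff₀ (by positivity)]; linarith
      have h4 : (hh^2 + t^2)/(2*t) = hh^2/(2*t) + t/2 := by field_simp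
      have h5 : 0 ≤ 2*m/ρ := div_nonneg (by linarith) hρ.le
      linarith
  -- combine
  refine ⟨?_, hΦ0, hfeas1⟩
  have hc1 : 2*m/ρ ≤ 2*((f xk - f xk1)/γ + ρ*D2*ln)/ρ := by gcongr
  have hc2 : 4*β^2*m/t ≤ 4*β^2*((f xk - f xk1)/γ + ρ*D2*ln)/t := by gcongr
  have hre : (2/ρ + 4*β^2/t) * ((f xk - f xk1)/γ + ρ*D2*ln)
      = 2*((f xk - f xk1)/γ + ρ*D2*ln)/ρ + 4*β^2*((f xk - f xk1)/γ + ρ*D2*ln)/t := by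
    ring
  linarith [hgap, hhm, hc1, hc2]

private lemma SCGSS_tele (A : ℕ → ℝ) (n : ℕ) :
    ∑ k ∈ Finset.Icc 1 n, (A k - A (k+1)) = A 1 - A (n+1) := by
  induction n with
  | zero => simp
  | succ n ih => rw [Finset.sum_Icc_succ_top (by omega), ih]; ring

private lemma SCGSS_sqrt_add_le {a b : ℝ} (ha : 0 ≤ a) (hb : 0 ≤ b) :
    Real.sqrt (a + b) ≤ Real.sqrt a + Real.sqrt b := by
  have h := Real.sqrt_le_sqrt (show a + b ≤ (Real.sqrt a + Real.sqrt b)^2 by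
    nlinarith [Real.sq_sqrt ha, Real.sq_sqrt hb, Real.sqrt_nonneg a, Real.sqrt_nonneg b])
  rwa [Real.sqrt_sq (by positivity)] at h


set_option maxHeartbeats 2000000 in
/-- Convergence of S³CG (Variant 2) on `βD`: for every `u ∈ βD`,
`(1/n)Σ_{k=1}^n E⟨∇f(x^k), x^k − u⟩ ≤ √(MΔ)/√(γn) + MΔ/(γρn) + √ε_n + ε_n/ρ`, where
`ε_n = (1/n)Σ_k [M'ρE‖λ^k‖₂ + 4D₂²E‖λ^k‖₂²]`, `M = max{16β², 2}`,
`M' = max{16D₂β², 3D₂}`. -/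
theorem SCGSS_variant2_rate
    {E : Type*} [NormedAddCommGroup E] [InnerProductSpace ℝ E] [FiniteDimensional ℝ E]
    {Ω : Type*} {mΩ : MeasurableSpace Ω} (μ : Measure Ω) [IsProbabilityMeasure μ]
    (ℱ : Filtration ℕ mΩ)
    -- the (possibly non-Euclidean) norm `‖·‖` on `E` (`‖·‖₂` is the inner-product norm)
    (Nm : E → ℝ)
    (hNm0 : Nm 0 = 0)
    (hNmpos : ∀ z : E, z ≠ 0 → 0 < Nm z)
    (hNmsmul : ∀ (a : ℝ) (z : E), Nm (a • z) = |a| * Nm z)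
    (hNmadd : ∀ z w : E, Nm (z + w) ≤ Nm z + Nm w)
    -- the dual norm `‖d‖_* = sup {⟨d,x⟩ : ‖x‖ ≤ 1}`
    (Dstar : E → ℝ)
    (hDstar : ∀ d : E, IsLUB ((fun z => ⟪d, z⟫) '' {z : E | Nm z ≤ 1}) (Dstar d))
    -- the linear minimization oracle `lmo(d) ∈ argmin {⟨d,x⟩ : ‖x‖ ≤ 1}`
    (lmo : E → E)
    (hlmo : ∀ d : E, Nm (lmo d) ≤ 1 ∧ ∀ z : E, Nm z ≤ 1 → ⟪d, lmo d⟫ ≤ ⟪d, z⟫)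
    -- `f` differentiable with gradient `f'`
    (f : E → ℝ) (f' : E → E)
    (hdiff : ∀ z, HasGradientAt f (f' z) z)
    -- `L`-smoothness and the associated descent inequality
    (L : ℝ) (hL : 0 < L)
    (hsmooth : ∀ z w : E, Dstar (f' z - f' w) ≤ L * Nm (z - w))
    (hdesc : ∀ z w : E, f w ≤ f z + ⟪f' z, w - z⟫ + L / 2 * (Nm (w - z)) ^ 2)
    -- constraint radius and `f* = inf_{x ∈ βD} f(x) > -∞`
    (β : ℝ) (hβ : 0 < β)
    (fstar : ℝ) (hfstar : IsGLB (f '' {z : E | Nm z ≤ β}) fstar)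
    (n : ℕ) (hn : 1 ≤ n)
    -- parameters: `γ ≤ 1/L`, `γρ ≤ 1`, `α ∈ (0,1]`
    (γ ρ σ : ℝ) (hγ : 0 < γ) (hρ : 0 < ρ) (hσ : 0 ≤ σ)
    (hγL : γ ≤ 1 / L) (hγρ : γ * ρ ≤ 1)
    (α : ℝ) (hα : 0 < α ∧ α ≤ 1)
    -- the iterates: `v^k = x^k − β·lmo(d^k)`, `η_k = min{ρ, ⟨d^k,v^k⟩/(4β²)}`,
    -- `x^{k+1} = x^k − γη_k v^k`, with `x¹ ∈ βD` deterministic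
    (x d g : ℕ → Ω → E)
    (x1 : E) (hx1 : ∀ ω, x 1 ω = x1) (hx1mem : Nm x1 ≤ β)
    (hd0 : ∀ ω, d 0 ω = 0)
    (hd : ∀ k, 1 ≤ k → ∀ ω, d k ω = α • g k ω + (1 - α) • d (k - 1) ω)
    (hx : ∀ (k : ℕ) (ω : Ω), x (k + 1) ω =
      x k ω - (γ * min ρ (⟪d k ω, x k ω - β • lmo (d k ω)⟫ /
          (4 * β ^ 2))) • (x k ω - β • lmo (d k ω)))
    -- the filtration is generated by the iterates
    (hx_adapted : ∀ k, StronglyMeasurable[ℱ k] (x k))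
    (hd_adapted : ∀ k, StronglyMeasurable[ℱ (k + 1)] (d k))
    -- the stochastic gradient is conditionally unbiased with variance at most `σ²`
    (hg_unbiased : ∀ k, 1 ≤ k → μ[g k | ℱ k] =ᵐ[μ] fun ω => f' (x k ω))
    (hg_var : ∀ k, 1 ≤ k →
      ∀ᵐ ω ∂μ, (μ[fun ω' => ‖g k ω' - f' (x k ω')‖ ^ 2 | ℱ k]) ω ≤ σ ^ 2)
    -- integrability of the quantities appearing in the statement
    (herrint2 : ∀ k, Integrable (fun ω => ‖d k ω - f' (x k ω)‖ ^ 2) μ)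
    (herrint1 : ∀ k, Integrable (fun ω => ‖d k ω - f' (x k ω)‖) μ)
    (hgapint : ∀ (k : ℕ) (u : E), Integrable (fun ω => ⟪f' (x k ω), x k ω - u⟫) μ)
    (hfint : ∀ k, Integrable (fun ω => f (x k ω)) μ)
    -- the Euclidean diameter `D₂` of `βD` and the constants `M`, `M'`, `ε_n`
    (D2 : ℝ) (hD2 : ∀ z w : E, Nm z ≤ β → Nm w ≤ β → ‖z - w‖ ≤ D2)
    (M M' : ℝ) (hM : M = max (16 * β ^ 2) 2) (hM' : M' = max (16 * D2 * β ^ 2) (3 * D2))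
    (εn : ℝ)
    (hεn : εn = (1 / (n : ℝ)) * ∑ k ∈ Finset.Icc 1 n,
      (M' * ρ * ∫ ω, ‖d k ω - f' (x k ω)‖ ∂μ
        + 4 * D2 ^ 2 * ∫ ω, ‖d k ω - f' (x k ω)‖ ^ 2 ∂μ)) :
    ∀ u : E, Nm u ≤ β →
      (1 / (n : ℝ)) * ∑ k ∈ Finset.Icc 1 n, ∫ ω, ⟪f' (x k ω), x k ω - u⟫ ∂μ
        ≤ Real.sqrt (M * (f x1 - fstar)) / Real.sqrt (γ * n)
          + M * (f x1 - fstar) / (γ * ρ * n)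
          + Real.sqrt εn + εn / ρ := by
  intro u hu
  have hρ' : ρ ≠ 0 := hρ.ne'
  have hn0 : (0:ℝ) < n := by exact_mod_cast hn
  have hn0' : (n:ℝ) ≠ 0 := hn0.ne'
  have hD2nn : 0 ≤ D2 := le_trans (by simp) (hD2 x1 x1 hx1mem hx1mem)
  have hM2 : (2:ℝ) ≤ M := hM ▸ le_max_right _ _
  have hM16 : 16*β^2 ≤ M := hM ▸ le_max_left _ _
  have hM0 : (0:ℝ) ≤ M := by linarith
  have hM'16 : 16*D2*β^2 ≤ M' := hM' ▸ le_max_left _ _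
  have hM'3 : 3*D2 ≤ M' := hM' ▸ le_max_right _ _
  have hM'0 : 0 ≤ M' := le_trans (by positivity) hM'16
  -- pointwise facts via the key lemma
  have hkey : ∀ (k : ℕ) (ω : Ω), Nm (x k ω) ≤ β → ∀ t : ℝ, 0 < t →
      (⟪f' (x k ω), x k ω - u⟫ ≤ (2/ρ + 4*β^2/t) *
          ((f (x k ω) - f (x (k+1) ω))/γ + ρ*D2*‖d k ω - f' (x k ω)‖)
          + t/2 + D2*‖d k ω - f' (x k ω)‖
        ∧ 0 ≤ (f (x k ω) - f (x (k+1) ω))/γ + ρ*D2*‖d k ω - f' (x k ω)‖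
        ∧ Nm (x (k+1) ω) ≤ β) := by
    intro k ω hfe t ht
    exact SCGSS_pointwise Nm hNmsmul hNmadd lmo hlmo f f' L γ ρ β D2
      hL hγ hρ hβ hγL hγρ hdesc hD2 u hu (x k ω) (x (k+1) ω) (d k ω) hfe (hx k ω) t ht
  -- feasibility of all iterates
  have hfeas : ∀ k, 1 ≤ k → ∀ ω, Nm (x k ω) ≤ β := by
    intro k hk
    induction k, hk using Nat.le_induction with
    | base => intro ω; rw [hx1 ω]; exact hx1mem
    | succ k hk ih => intro ω; exact (hkey k ω (ih ω) 1 one_pos).2.2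
  -- abbreviations
  obtain ⟨F, hF⟩ : ∃ F : ℕ → ℝ, ∀ k, F k = ∫ ω, f (x k ω) ∂μ := ⟨_, fun _ => rfl⟩
  obtain ⟨Λ, hΛ⟩ : ∃ Λ : ℕ → ℝ, ∀ k, Λ k = ∫ ω, ‖d k ω - f' (x k ω)‖ ∂μ := ⟨_, fun _ => rfl⟩
  obtain ⟨G, hG⟩ : ∃ G : ℕ → ℝ, ∀ k, G k = ∫ ω, ⟪f' (x k ω), x k ω - u⟫ ∂μ := ⟨_, fun _ => rfl⟩
  have hΛnn : ∀ k, 0 ≤ Λ k := fun k => (hΛ k) ▸ integral_nonneg fun ω => norm_nonneg _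
  -- the integral of Φ_k
  have hΦint : ∀ k, Integrable (fun ω =>
      (f (x k ω) - f (x (k+1) ω))/γ + ρ*D2*‖d k ω - f' (x k ω)‖) μ := fun k =>
    (((hfint k).sub (hfint (k+1))).div_const γ).add ((herrint1 k).const_mul (ρ*D2))
  have hΦval : ∀ k, ∫ ω, ((f (x k ω) - f (x (k+1) ω))/γ + ρ*D2*‖d k ω - f' (x k ω)‖) ∂μ
      = (F k - F (k+1))/γ + ρ*D2*Λ k := by
    intro k
    have hI1 : Integrable (fun ω => (f (x k ω) - f (x (k+1) ω))/γ) μ :=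
      ((hfint k).sub (hfint (k+1))).div_const γ
    have hI2 : Integrable (fun ω => ρ*D2*‖d k ω - f' (x k ω)‖) μ :=
      (herrint1 k).const_mul (ρ*D2)
    rw [integral_add hI1 hI2, integral_div,
      integral_sub (hfint k) (hfint (k+1)), integral_const_mul _, hF, hF, hΛ]
  have hΦnn : ∀ k, 1 ≤ k → 0 ≤ (F k - F (k+1))/γ + ρ*D2*Λ k := by
    intro k hk
    rw [← hΦval k]
    exact integral_nonneg fun ω => (hkey k ω (hfeas k hk ω) 1 one_pos).2.1
  -- per-iteration integrated bound
  have hGk : ∀ t : ℝ, 0 < t → ∀ k, 1 ≤ k →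
      G k ≤ (2/ρ + 4*β^2/t) * ((F k - F (k+1))/γ + ρ*D2*Λ k) + t/2 + D2*Λ k := by
    intro t ht k hk
    have hI4 : Integrable (fun ω => (2/ρ + 4*β^2/t) *
        ((f (x k ω) - f (x (k+1) ω))/γ + ρ*D2*‖d k ω - f' (x k ω)‖)) μ :=
      (hΦint k).const_mul _
    have hI5 : Integrable (fun ω => (2/ρ + 4*β^2/t) *
        ((f (x k ω) - f (x (k+1) ω))/γ + ρ*D2*‖d k ω - f' (x k ω)‖) + t/2) μ :=
      hI4.add (integrable_const _)
    have hI6 : Integrable (fun ω => D2*‖d k ω - f' (x k ω)‖) μ :=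
      (herrint1 k).const_mul D2
    have hrhsint : Integrable (fun ω =>
        (2/ρ + 4*β^2/t) * ((f (x k ω) - f (x (k+1) ω))/γ + ρ*D2*‖d k ω - f' (x k ω)‖)
          + t/2 + D2*‖d k ω - f' (x k ω)‖) μ := hI5.add hI6
    have hmono := integral_mono (hgapint k u) hrhsint
      (fun ω => (hkey k ω (hfeas k hk ω) t ht).1)
    have hval : (∫ ω, ((2/ρ + 4*β^2/t) *
          ((f (x k ω) - f (x (k+1) ω))/γ + ρ*D2*‖d k ω - f' (x k ω)‖)
          + t/2 + D2*‖d k ω - f' (x k ω)‖) ∂μ)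
        = (2/ρ + 4*β^2/t) * ((F k - F (k+1))/γ + ρ*D2*Λ k) + t/2 + D2*Λ k := by
      rw [integral_add hI5 hI6, integral_add hI4 (integrable_const _),
        integral_const_mul _, integral_const_mul _, integral_const, hΦval k, hΛ]
      simp [measure_univ]
    rw [hval] at hmono
    exact (hG k) ▸ hmono
  -- sums
  have hcard : (Finset.Icc 1 n).card = n := by rw [Nat.card_Icc]; omega
  obtain ⟨SΛ, hSΛ⟩ : ∃ S : ℝ, S = ∑ k ∈ Finset.Icc 1 n, Λ k := ⟨_, rfl⟩
  have hSΛnn : 0 ≤ SΛ := hSΛ ▸ Finset.sum_nonneg fun k _ => hΛnn k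
  obtain ⟨Q, hQdef⟩ : ∃ Q : ℝ, Q = (F 1 - F (n+1))/γ + ρ*D2*SΛ := ⟨_, rfl⟩
  have hS1 : ∑ k ∈ Finset.Icc 1 n, ((F k - F (k+1))/γ + ρ*D2*Λ k) = Q := by
    rw [hQdef, hSΛ, Finset.sum_add_distrib, ← Finset.mul_sum]
    congr 1
    have h := SCGSS_tele (fun k => F k / γ) n
    simp only [← sub_div] at h
    exact h
  have hQnn : 0 ≤ Q := by
    rw [← hS1]
    exact Finset.sum_nonneg fun k hk => hΦnn k (Finset.mem_Icc.mp hk).1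
  have hsum0 : ∀ t : ℝ, 0 < t → ∑ k ∈ Finset.Icc 1 n, G k
      ≤ (2/ρ + 4*β^2/t) * Q + (n:ℝ)*(t/2) + D2*SΛ := by
    intro t ht
    calc ∑ k ∈ Finset.Icc 1 n, G k
        ≤ ∑ k ∈ Finset.Icc 1 n, ((2/ρ + 4*β^2/t) * ((F k - F (k+1))/γ + ρ*D2*Λ k)
            + t/2 + D2*Λ k) :=
          Finset.sum_le_sum fun k hk => hGk t ht k (Finset.mem_Icc.mp hk).1
      _ = (2/ρ + 4*β^2/t) * Q + (n:ℝ)*(t/2) + D2*SΛ := by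
          rw [Finset.sum_add_distrib, Finset.sum_add_distrib, ← Finset.mul_sum, hS1,
            Finset.sum_const, hcard, ← Finset.mul_sum, ← hSΛ, nsmul_eq_mul]
  -- optimize over t
  have hmain : ∑ k ∈ Finset.Icc 1 n, G k
      ≤ (2/ρ)*Q + Real.sqrt (8*β^2*(n:ℝ)*Q) + D2*SΛ := by
    rcases hQnn.eq_or_lt with hq0 | hq0
    · refine le_of_forall_pos_le_add fun ε hε => ?_
      have h := hsum0 (2*ε/n) (by positivity)
      rw [← hq0, mul_zero] at h
      have he : (n:ℝ)*((2*ε/n)/2) = ε := by field_simp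
      rw [← hq0, mul_zero, mul_zero]
      simp only [Real.sqrt_zero]
      linarith
    · obtain ⟨s, hsdef⟩ : ∃ s : ℝ, s = Real.sqrt (8*β^2*(n:ℝ)*Q) := ⟨_, rfl⟩
      have hs : 0 < s := hsdef ▸ Real.sqrt_pos.mpr (by positivity)
      have hs2 : s^2 = 8*β^2*(n:ℝ)*Q := by rw [hsdef]; exact Real.sq_sqrt (by positivity)
      have h := hsum0 (s/n) (by positivity)
      have e3 : (n:ℝ)*((s/(n:ℝ))/2) = s/2 := by field_simp
      have e1 : (4*β^2/(s/(n:ℝ)))*Q = (4*β^2*(n:ℝ)*Q)/s := by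
        rw [div_div_eq_mul_div]; ring
      have e4 : (4*β^2*(n:ℝ)*Q)/s = s/2 := by
        rw [div_eq_div_iff hs.ne' (two_ne_zero)]
        nlinarith [hs2]
      rw [← hsdef]
      calc ∑ k ∈ Finset.Icc 1 n, G k
          ≤ (2/ρ + 4*β^2/(s/(n:ℝ)))*Q + (n:ℝ)*((s/(n:ℝ))/2) + D2*SΛ := h
        _ = (2/ρ)*Q + ((4*β^2/(s/(n:ℝ)))*Q + (n:ℝ)*((s/(n:ℝ))/2)) + D2*SΛ := by ring
        _ = (2/ρ)*Q + s + D2*SΛ := by rw [e1, e4, e3]; ring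
  -- bounds on Q and εn
  have hF1 : F 1 = f x1 := by
    rw [hF]
    simp only [hx1]
    simp [measure_univ]
  have hFn1 : fstar ≤ F (n+1) := by
    have hlow : ∀ ω, fstar ≤ f (x (n+1) ω) :=
      fun ω => hfstar.1 ⟨x (n+1) ω, hfeas (n+1) (by omega) ω, rfl⟩
    have h := integral_mono (integrable_const fstar) (hfint (n+1)) hlow
    rwa [integral_const, probReal_univ, one_smul, ← hF] at h
  have hΔ0 : 0 ≤ f x1 - fstar := by
    have := hfstar.1 ⟨x1, hx1mem, rfl⟩
    linarith
  have hQle : Q ≤ (f x1 - fstar)/γ + ρ*D2*SΛ := by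
    rw [hQdef, hF1]
    have h1 : f x1 - F (n+1) ≤ f x1 - fstar := by linarith
    have h2 : (f x1 - F (n+1))/γ ≤ (f x1 - fstar)/γ := by gcongr
    linarith
  -- εn bounds
  obtain ⟨Λ2, hΛ2⟩ : ∃ Λ2 : ℕ → ℝ, ∀ k, Λ2 k = ∫ ω, ‖d k ω - f' (x k ω)‖^2 ∂μ :=
    ⟨_, fun _ => rfl⟩
  have hεn1 : M'*ρ*SΛ ≤ (n:ℝ)*εn := by
    rw [hεn]
    have he : (n:ℝ) * ((1/(n:ℝ)) * ∑ k ∈ Finset.Icc 1 n,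
        (M' * ρ * ∫ ω, ‖d k ω - f' (x k ω)‖ ∂μ
          + 4 * D2 ^ 2 * ∫ ω, ‖d k ω - f' (x k ω)‖ ^ 2 ∂μ))
        = ∑ k ∈ Finset.Icc 1 n,
        (M' * ρ * ∫ ω, ‖d k ω - f' (x k ω)‖ ∂μ
          + 4 * D2 ^ 2 * ∫ ω, ‖d k ω - f' (x k ω)‖ ^ 2 ∂μ) := by
      field_simp
    rw [he]
    calc M'*ρ*SΛ = ∑ k ∈ Finset.Icc 1 n, M'*ρ*(∫ ω, ‖d k ω - f' (x k ω)‖ ∂μ) := by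
          rw [hSΛ, Finset.mul_sum]
          exact Finset.sum_congr rfl fun k _ => by rw [hΛ]
      _ ≤ _ := Finset.sum_le_sum fun k _ => le_add_of_nonneg_right
          (mul_nonneg (by positivity) (integral_nonneg fun ω => by positivity))
  have hεnn : 0 ≤ εn := by
    have h0 : 0 ≤ M'*ρ*SΛ := mul_nonneg (mul_nonneg hM'0 hρ.le) hSΛnn
    nlinarith
  -- put it all together
  have hGoal : (1/(n:ℝ)) * ∑ k ∈ Finset.Icc 1 n, G k
      ≤ Real.sqrt (M * (f x1 - fstar)) / Real.sqrt (γ * n)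
        + M * (f x1 - fstar) / (γ * ρ * n) + Real.sqrt εn + εn / ρ := by
    -- normalized quantities
    have hA : (1/(n:ℝ)) * ∑ k ∈ Finset.Icc 1 n, G k
        ≤ (2/ρ)*(Q/n) + Real.sqrt (8*β^2*(Q/n)) + D2*(SΛ/n) := by
      have h1 := mul_le_mul_of_nonneg_left hmain (le_of_lt (by positivity : (0:ℝ) < 1/n))
      have hsn : Real.sqrt (8*β^2*(n:ℝ)*Q) * (1/(n:ℝ)) = Real.sqrt (8*β^2*(Q/n)) := by
        rw [show 8*β^2*(Q/(n:ℝ)) = (8*β^2*(n:ℝ)*Q)/((n:ℝ)^2) by field_simp,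
          Real.sqrt_div (by positivity), Real.sqrt_sq hn0.le]
        ring
      calc (1/(n:ℝ)) * ∑ k ∈ Finset.Icc 1 n, G k
          ≤ (1/(n:ℝ)) * ((2/ρ)*Q + Real.sqrt (8*β^2*(n:ℝ)*Q) + D2*SΛ) := h1
        _ = (2/ρ)*(Q/n) + Real.sqrt (8*β^2*(n:ℝ)*Q) * (1/(n:ℝ)) + D2*(SΛ/n) := by
            ring
        _ = (2/ρ)*(Q/n) + Real.sqrt (8*β^2*(Q/n)) + D2*(SΛ/n) := by rw [hsn]
    have hQn : Q/n ≤ (f x1 - fstar)/(γ*n) + ρ*D2*(SΛ/n) := by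
      have h1 : Q/n ≤ ((f x1 - fstar)/γ + ρ*D2*SΛ)/n := by gcongr
      have h2 : ((f x1 - fstar)/γ + ρ*D2*SΛ)/(n:ℝ)
          = (f x1 - fstar)/(γ*n) + ρ*D2*(SΛ/n) := by field_simp
      linarith
    have hQn0 : 0 ≤ Q/(n:ℝ) := div_nonneg hQnn hn0.le
    -- the sqrt term
    have hεM' : M'*ρ*(SΛ/n) ≤ εn := by
      have he : M'*ρ*(SΛ/(n:ℝ)) = (M'*ρ*SΛ)/n := by ring
      rw [he, div_le_iff₀ hn0]
      linarith [hεn1]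
    have hsq : Real.sqrt (8*β^2*(Q/n))
        ≤ Real.sqrt (M*(f x1 - fstar)/(γ*n)) + Real.sqrt εn := by
      have h1 : 8*β^2*(Q/(n:ℝ)) ≤ 8*β^2*((f x1 - fstar)/(γ*n)) + 8*β^2*(ρ*D2*(SΛ/n)) := by
        nlinarith [hQn]
      have h2 : Real.sqrt (8*β^2*(Q/n))
          ≤ Real.sqrt (8*β^2*((f x1 - fstar)/(γ*n)) + 8*β^2*(ρ*D2*(SΛ/n))) :=
        Real.sqrt_le_sqrt h1
      have h3 : Real.sqrt (8*β^2*((f x1 - fstar)/(γ*n)) + 8*β^2*(ρ*D2*(SΛ/n)))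
          ≤ Real.sqrt (8*β^2*((f x1 - fstar)/(γ*n))) + Real.sqrt (8*β^2*(ρ*D2*(SΛ/n))) :=
        SCGSS_sqrt_add_le (by positivity)
          (by positivity)
      have h4 : Real.sqrt (8*β^2*((f x1 - fstar)/(γ*n)))
          ≤ Real.sqrt (M*(f x1 - fstar)/(γ*n)) := by
        apply Real.sqrt_le_sqrt
        have : 8*β^2 ≤ M := by linarith [hM16, sq_nonneg β]
        have hd0 : 0 ≤ (f x1 - fstar)/(γ*n) := by positivity
        calc 8*β^2*((f x1 - fstar)/(γ*n)) ≤ M*((f x1 - fstar)/(γ*n)) :=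
              mul_le_mul_of_nonneg_right this hd0
          _ = M*(f x1 - fstar)/(γ*n) := by ring
      have h5 : Real.sqrt (8*β^2*(ρ*D2*(SΛ/n))) ≤ Real.sqrt εn := by
        apply Real.sqrt_le_sqrt
        have hb : 8*β^2*(ρ*D2*(SΛ/n)) ≤ M'*ρ*(SΛ/n) := by
          have hsn0 : 0 ≤ SΛ/(n:ℝ) := div_nonneg hSΛnn hn0.le
          have hb1 : 16*D2*β^2*(ρ*(SΛ/n)) ≤ M'*(ρ*(SΛ/n)) :=
            mul_le_mul_of_nonneg_right hM'16 (mul_nonneg hρ.le hsn0)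
          have hb2 : 0 ≤ D2*β^2*(ρ*(SΛ/(n:ℝ))) := by positivity
          nlinarith [hb1, hb2]
        linarith [hεM']
      linarith
    -- the (2/ρ)Q term
    have h2ρ : (2/ρ)*(Q/n) ≤ M*(f x1 - fstar)/(γ*ρ*n) + 2*D2*(SΛ/n) := by
      have h1 : (2/ρ)*(Q/n) ≤ (2/ρ)*((f x1 - fstar)/(γ*n) + ρ*D2*(SΛ/n)) :=
        mul_le_mul_of_nonneg_left hQn (by positivity)
      have h2 : (2/ρ)*((f x1 - fstar)/(γ*n) + ρ*D2*(SΛ/n))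
          = 2*(f x1 - fstar)/(γ*ρ*n) + 2*D2*(SΛ/n) := by
        field_simp
        try ring
      have h3 : 2*((f x1 - fstar)/(γ*ρ*n)) ≤ M*((f x1 - fstar)/(γ*ρ*n)) :=
        mul_le_mul_of_nonneg_right hM2 (by positivity)
      have e1 : 2*(f x1 - fstar)/(γ*ρ*n) = 2*((f x1 - fstar)/(γ*ρ*n)) := by ring
      have e2 : M*(f x1 - fstar)/(γ*ρ*n) = M*((f x1 - fstar)/(γ*ρ*n)) := by ring
      linarith
    -- the 3 D2 SΛ/n term
    have h3D2 : 3*D2*(SΛ/n) ≤ εn/ρ := by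
      rw [le_div_iff₀ hρ]
      have hsn0 : 0 ≤ SΛ/(n:ℝ) := div_nonneg hSΛnn hn0.le
      have hb : 3*D2*(SΛ/n)*ρ ≤ M'*ρ*(SΛ/n) := by nlinarith [mul_nonneg hρ.le hsn0]
      linarith [hεM']
    -- sqrt division
    have hdiv : Real.sqrt (M*(f x1 - fstar)/(γ*n))
        = Real.sqrt (M*(f x1 - fstar)) / Real.sqrt (γ*n) :=
      Real.sqrt_div (by positivity) _
    rw [hdiv] at hsq
    linarith [hA, hsq, h2ρ, h3D2]
  have hGfin : ∀ k, (∫ ω, ⟪f' (x k ω), x k ω - u⟫ ∂μ) = G k := fun k => (hG k).symm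
  calc (1 / (n : ℝ)) * ∑ k ∈ Finset.Icc 1 n, ∫ ω, ⟪f' (x k ω), x k ω - u⟫ ∂μ
      = (1/(n:ℝ)) * ∑ k ∈ Finset.Icc 1 n, G k := by
        rw [Finset.sum_congr rfl fun k _ => hGfin k]
    _ ≤ _ := hGoal
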